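/- Let G be a group acting on the right on a set S, let σ : G → G be a group homomorphism, and let σ : S → S be a map satisfying (s·h)^σ = s^σ · h^σ for all s ∈ S and h ∈ G. Fix v ∈ S and g ∈ G, and set w = v·g. Then the map h ↦ g h g⁻¹ is an injective map from {h ∈ G : σ(h) = h and w·h = w} into {y ∈ G : v·y = v and y⁻¹ · (g·σ(g)⁻¹) · σ(y) = g·σ(g)⁻¹}. In particular the cardinality of the first set is at most that of the second. -/

import Mathlib

/-- Let `G` be a group acting on the right on a set `S`, `σG : G → G` a group
homomorphism and `σS : S → S` a compatible map, i.e. `(s·h)^σ = s^σ·h^σ`.  Fix `v ∈ S`, `g ∈ G`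
and set `w = v·g`.  Then `h ↦ g h g⁻¹` maps the set
`{h ∈ G : σ(h) = h ∧ w·h = w}` injectively into
`{y ∈ G : v·y = v ∧ y⁻¹(g σ(g)⁻¹)σ(y) = g σ(g)⁻¹}`; in particular the cardinality of the first
set is at most that of the second. -/
theorem stmt3 {G S : Type*} [Group G] (act : S → G → S)
    (h_one : ∀ s, act s 1 = s)
    (h_mul : ∀ (s : S) (g₁ g₂ : G), act s (g₁ * g₂) = act (act s g₁) g₂)
    (σG : G →* G) (σS : S → S)
    (hcomp : ∀ (s : S) (h : G), σS (act s h) = act (σS s) (σG h))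
    (v : S) (g : G) (w : S) (hw : w = act v g) :
    Set.MapsTo (fun h => g * h * g⁻¹)
        {h : G | σG h = h ∧ act w h = w}
        {y : G | act v y = v ∧ y⁻¹ * (g * (σG g)⁻¹) * σG y = g * (σG g)⁻¹} ∧
    Set.InjOn (fun h => g * h * g⁻¹) {h : G | σG h = h ∧ act w h = w} ∧
    Cardinal.mk {h : G | σG h = h ∧ act w h = w} ≤
      Cardinal.mk {y : G | act v y = v ∧ y⁻¹ * (g * (σG g)⁻¹) * σG y = g * (σG g)⁻¹} := by
  have hmaps : Set.MapsTo (fun h => g * h * g⁻¹)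
        {h : G | σG h = h ∧ act w h = w}
        {y : G | act v y = v ∧ y⁻¹ * (g * (σG g)⁻¹) * σG y = g * (σG g)⁻¹} := by
    rintro h ⟨hσ, hwh⟩
    constructor
    · have : act v (g * h * g⁻¹) = act (act (act v g) h) g⁻¹ := by
        rw [h_mul, h_mul]
      rw [this, ← hw, hwh, hw, ← h_mul, mul_inv_cancel, h_one]
    · simp only [map_mul, map_inv, hσ]
      group
  have hinj : Set.InjOn (fun h => g * h * g⁻¹) {h : G | σG h = h ∧ act w h = w} := by
    intro a _ b _ hab
    simpa using mul_left_cancel (mul_right_cancel hab)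
  exact ⟨hmaps, hinj, (Cardinal.mk_image_eq_of_injOn _ _ hinj).symm.trans_le (Cardinal.mk_le_mk_of_subset (Set.image_subset_iff.mpr hmaps))⟩
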